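/- For all n ≥ 1, t(2n) = s(n) − t(n-1), and for all n ≥ 0, t(2n+1) = s(n) − t(n). -/
import Mathlib


def rs : ℕ → ℤ
  | 0 => 1
  | (n+1) =>
    if (n+1) % 2 = 0 then rs ((n+1)/2)
    else (-1)^((n+1)/2) * rs ((n+1)/2)
decreasing_by all_goals exact Nat.div_lt_self (Nat.succ_pos n) (by norm_num)

def s (n : ℕ) : ℤ := ∑ i ∈ Finset.range (n+1), rs i

def t (n : ℕ) : ℤ := ∑ i ∈ Finset.range (n+1), (-1)^i * rs i

lemma rs_even (k : ℕ) : rs (2*k) = rs k := by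
  cases k with
  | zero => rfl
  | succ m =>
    have h : 2*(m+1) = (2*m+1)+1 := by ring
    rw [h, rs]
    have : ((2*m+1)+1) % 2 = 0 := by omega
    simp [this]
    congr 1
    omega

lemma rs_odd (k : ℕ) : rs (2*k+1) = (-1)^k * rs k := by
  rw [show 2*k+1 = (2*k)+1 from rfl, rs]
  have h1 : (2*k+1) % 2 ≠ 0 := by omega
  have h2 : (2*k+1)/2 = k := by omega
  simp [h1, h2]

lemma t_succ (n : ℕ) : t (n+1) = t n + (-1)^(n+1) * rs (n+1) := by
  simp [t, Finset.sum_range_succ]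

lemma s_succ (n : ℕ) : s (n+1) = s n + rs (n+1) := by
  simp [s, Finset.sum_range_succ]

lemma key (n : ℕ) : t (2*n+1) = s n - t n := by
  induction n with
  | zero => norm_num [t, s, Finset.sum_range_succ, rs]
  | succ m ih =>
    have h : 2*(m+1)+1 = (2*m+1)+1+1 := by ring
    rw [h, t_succ, t_succ, ih, s_succ, t_succ]
    have e1 : (2*m+1)+1 = 2*(m+1) := by ring
    have e2 : (2*m+1)+1+1 = 2*(m+1)+1 := by ring
    rw [e1, e2] at *
    rw [rs_even, rs_odd]
    have p1 : ((-1:ℤ))^(2*(m+1)) = 1 := by rw [pow_mul]; norm_num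
    have p2 : ((-1:ℤ))^(2*(m+1)+1) = -1 := by rw [pow_succ, p1]; ring
    rw [p1, p2]
    ring

theorem stmt2 : (∀ n : ℕ, 1 ≤ n → t (2*n) = s n - t (n-1)) ∧
    (∀ n : ℕ, t (2*n+1) = s n - t n) := by
  constructor
  · intro n hn
    obtain ⟨m, rfl⟩ := Nat.exists_eq_add_of_le hn
    have h : 2*(1+m) = (2*m+1)+1 := by ring
    have hk := key m
    rw [h, t_succ, hk]
    have e : (2*m+1)+1 = 2*(m+1) := by ring
    rw [e, rs_even]
    have hm : 1 + m - 1 = m := by omega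
    rw [hm]
    have hs : s (1+m) = s m + rs (m+1) := by rw [Nat.add_comm]; exact s_succ m
    have p1 : ((-1:ℤ))^(2*(m+1)) = 1 := by rw [pow_mul]; norm_num
    rw [hs, p1]
    ring
  · exact key
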